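/- Fix an integer N ≥ 2 and a real R > 0, and let H = {x ∈ ℝ^N : ‖x‖ = R and x_N ≥ 0} be the hemisphere. Let J = (0, …, 0, R) be the pole. Then sup_{y ∈ H} ‖J − y‖ = √2·R, and for every x ∈ H with x ≠ J one has sup_{y ∈ H} ‖x − y‖ > √2·R; that is, J is the unique Chebyshev centre of H among points of H (the unique point minimizing the maximum distance to H). -/

import Mathlib

open Finset
open scoped RealInnerProductSpace

private lemma eq_of_sq_eq' {a b : ℝ} (ha : 0 ≤ a) (hb : 0 ≤ b) (h : a ^ 2 = b ^ 2) : a = b := by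
  rw [← Real.sqrt_sq ha, ← Real.sqrt_sq hb, h]

theorem stmt_19 (N : ℕ) (hN : 2 ≤ N) (R : ℝ) (hR : 0 < R)
    (H : Set (EuclideanSpace ℝ (Fin N)))
    (hH : H = {x : EuclideanSpace ℝ (Fin N) | ‖x‖ = R ∧ 0 ≤ x ⟨N - 1, by omega⟩})
    (J : EuclideanSpace ℝ (Fin N))
    (hJ : J = EuclideanSpace.single (⟨N - 1, by omega⟩ : Fin N) R) :
    sSup ((fun y => ‖J - y‖) '' H) = Real.sqrt 2 * R ∧
    ∀ x ∈ H, x ≠ J → Real.sqrt 2 * R < sSup ((fun y => ‖x - y‖) '' H) := by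
  have hN1 : N - 1 < N := by omega
  have h0N : 0 < N := by omega
  set n : Fin N := ⟨N - 1, hN1⟩ with hn
  have hnormsq : ∀ z : EuclideanSpace ℝ (Fin N), ‖z‖ ^ 2 = ∑ i, (z i) ^ 2 := by
    intro z
    rw [EuclideanSpace.norm_eq, Real.sq_sqrt (by positivity)]
    simp [Real.norm_eq_abs, sq_abs]
  have hinner : ∀ a b : EuclideanSpace ℝ (Fin N), (inner ℝ a b : ℝ) = ∑ i, a i * b i := by
    intro a b
    simp [PiLp.inner_apply, RCLike.inner_apply, mul_comm]
  have hJnorm : ‖J‖ = R := by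
    rw [hJ, EuclideanSpace.norm_single, Real.norm_eq_abs, abs_of_pos hR]
  have hJn : ∀ v : EuclideanSpace ℝ (Fin N), (inner ℝ J v : ℝ) = R * v n := by
    intro v
    rw [hJ]
    simpa using EuclideanSpace.inner_single_left (𝕜 := ℝ) n R v
  have hsq2 : (Real.sqrt 2 * R) ^ 2 = 2 * R ^ 2 := by
    rw [mul_pow, Real.sq_sqrt (by norm_num : (0:ℝ) ≤ 2)]
  constructor
  · -- sup of distances from J is √2 R
    have i0 : Fin N := ⟨0, h0N⟩
    have hi0n : (⟨0, h0N⟩ : Fin N) ≠ n := by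
      simp only [hn, ne_eq, Fin.mk.injEq]
      omega
    set y₀ : EuclideanSpace ℝ (Fin N) := EuclideanSpace.single ⟨0, h0N⟩ R with hy₀
    have hy₀n : y₀ n = 0 := by
      rw [hy₀, EuclideanSpace.single_apply, if_neg (Ne.symm hi0n)]
    have hy₀H : y₀ ∈ H := by
      rw [hH]
      refine ⟨?_, ?_⟩
      · rw [hy₀, EuclideanSpace.norm_single, Real.norm_eq_abs, abs_of_pos hR]
      · exact le_of_eq hy₀n.symm
    have hy₀norm : ‖y₀‖ = R := by
      rw [hy₀, EuclideanSpace.norm_single, Real.norm_eq_abs, abs_of_pos hR]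
    have hdist : ‖J - y₀‖ = Real.sqrt 2 * R := by
      apply eq_of_sq_eq' (norm_nonneg _) (by positivity)
      rw [hsq2, norm_sub_sq_real, hJnorm, hy₀norm, hJn, hy₀n]
      ring
    refine IsGreatest.csSup_eq ⟨⟨y₀, hy₀H, hdist⟩, ?_⟩
    rintro v ⟨y, hyH, rfl⟩
    show ‖J - y‖ ≤ Real.sqrt 2 * R
    rw [hH] at hyH
    obtain ⟨hy1, hy2⟩ := hyH
    have hy2' : 0 ≤ y n := hy2
    have hsqle : ‖J - y‖ ^ 2 = 2 * R ^ 2 - 2 * (R * y n) := by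
      rw [norm_sub_sq_real, hJnorm, hy1, hJn]
      ring
    nlinarith [norm_nonneg (J - y), Real.sqrt_nonneg 2, mul_nonneg hR.le hy2',
      mul_pos hR hR, hsqle, hsq2, mul_nonneg (Real.sqrt_nonneg 2) hR.le]
  · -- uniqueness
    intro x hxH hxJ
    rw [hH] at hxH
    have hx1 : ‖x‖ = R := hxH.1
    have hx2 : 0 ≤ x n := hxH.2
    set s : ℝ := ∑ i ∈ univ.erase n, (x i) ^ 2 with hs
    have htot : (x n) ^ 2 + s = ∑ i, (x i) ^ 2 :=
      Finset.add_sum_erase _ (fun i => (x i) ^ 2) (mem_univ n)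
    have hsum : (x n) ^ 2 + s = R ^ 2 := by
      rw [htot, ← hnormsq x, hx1]
    have hs0 : 0 ≤ s := Finset.sum_nonneg fun i _ => sq_nonneg _
    have hspos : 0 < s := by
      rcases hs0.lt_or_eq with h | h
      · exact h
      · exfalso
        apply hxJ
        have hzero : ∀ i ∈ univ.erase n, x i = 0 := by
          intro i hi
          have := (Finset.sum_eq_zero_iff_of_nonneg (fun i _ => sq_nonneg (x i))).1 h.symm i hi
          exact pow_eq_zero_iff (by norm_num) |>.1 this
        have hxn : x n = R := by
          apply eq_of_sq_eq' hx2 hR.le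
          linarith
        rw [hJ]
        ext i
        by_cases hi : i = n
        · subst hi
          rw [hxn, EuclideanSpace.single_apply, if_pos rfl]
        · rw [hzero i (Finset.mem_erase.2 ⟨hi, mem_univ i⟩), EuclideanSpace.single_apply,
            if_neg hi]
    set c : ℝ := Real.sqrt s with hcdef
    have hc : 0 < c := Real.sqrt_pos.2 hspos
    have hc2 : c ^ 2 = s := Real.sq_sqrt hs0
    set y : EuclideanSpace ℝ (Fin N) := WithLp.toLp 2 (fun i => if i = n then 0 else -(R / c) * x i) with hy
    have hyn : y n = 0 := by rw [hy]; simp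
    have hsumy : ∑ i, (y i) ^ 2 = R ^ 2 := by
      rw [← Finset.add_sum_erase _ _ (mem_univ n), hyn]
      have : ∀ i ∈ univ.erase n, (y i) ^ 2 = (R / c) ^ 2 * (x i) ^ 2 := by
        intro i hi
        have hne := (Finset.mem_erase.1 hi).1
        simp [hy, hne]
        ring
      rw [Finset.sum_congr rfl this, ← Finset.mul_sum, ← hs, div_pow, hc2,
        div_mul_cancel₀ _ hspos.ne']
      ring
    have hynorm : ‖y‖ = R := by
      apply eq_of_sq_eq' (norm_nonneg _) hR.le
      rw [hnormsq, hsumy]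
    have hyH : y ∈ H := by
      rw [hH]
      exact ⟨hynorm, le_of_eq hyn.symm⟩
    have hxy : (inner ℝ x y : ℝ) = -(R * c) := by
      rw [hinner, ← Finset.add_sum_erase _ _ (mem_univ n), hyn]
      have : ∀ i ∈ univ.erase n, x i * y i = -(R / c) * (x i) ^ 2 := by
        intro i hi
        have hne := (Finset.mem_erase.1 hi).1
        simp [hy, hne]
        ring
      rw [Finset.sum_congr rfl this, ← Finset.mul_sum, ← hs]
      rw [← hc2]
      field_simp
      ring
    have hdsq : ‖x - y‖ ^ 2 = 2 * R ^ 2 + 2 * (R * c) := by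
      rw [norm_sub_sq_real, hx1, hynorm, hxy]
      ring
    have hlt : Real.sqrt 2 * R < ‖x - y‖ := by
      apply lt_of_pow_lt_pow_left₀ 2 (norm_nonneg _)
      rw [hdsq, hsq2]
      nlinarith [mul_pos hR hc]
    have hbdd : BddAbove ((fun y => ‖x - y‖) '' H) := by
      refine ⟨2 * R, ?_⟩
      rintro v ⟨y', hy', rfl⟩
      rw [hH] at hy'
      have := norm_sub_le x y'
      rw [hx1, hy'.1] at this
      linarith
    calc Real.sqrt 2 * R < ‖x - y‖ := hlt
      _ ≤ sSup ((fun y => ‖x - y‖) '' H) := le_csSup hbdd ⟨y, hyH, rfl⟩
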